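/- For every n ≥ 1, every k ≥ 2, and every symmetric shared-quality instance (valuations v_i(s) = f_i(∑_j s_j) with each f_i : {0,...,n(k−1)} → ℝ nonnegative and weakly increasing), there exists a mechanism (x, p) that is ex-post incentive compatible and ex-post individually rational and 5(k−1)-approximates welfare, i.e., for every signal profile s, ∑_i x_i(s)·v_i(s) ≥ (1/(5(k−1)))·max_i v_i(s). -/

import Mathlib

lemma myerson_ic (a F : ℕ → ℝ) (ha : Monotone a) (hF : Monotone F) (si r : ℕ) :
    a r * F si - ∑ c ∈ Finset.range r, (a (c+1) - a c) * F (c+1)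
      ≤ a si * F si - ∑ c ∈ Finset.range si, (a (c+1) - a c) * F (c+1) := by
  rcases le_total r si with h | h
  · have hP : ∑ c ∈ Finset.range si, (a (c+1) - a c) * F (c+1)
        - ∑ c ∈ Finset.range r, (a (c+1) - a c) * F (c+1)
        = ∑ c ∈ Finset.Ico r si, (a (c+1) - a c) * F (c+1) := by
      rw [Finset.sum_Ico_eq_sub _ h]
    have h1 : ∑ c ∈ Finset.Ico r si, (a (c+1) - a c) * F (c+1)
        ≤ ∑ c ∈ Finset.Ico r si, (a (c+1) - a c) * F si := by
      refine Finset.sum_le_sum fun c hc => ?_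
      have hc' := Finset.mem_Ico.mp hc
      exact mul_le_mul_of_nonneg_left (hF hc'.2) (by simpa using ha (Nat.le_succ c))
    have h2 : ∑ c ∈ Finset.Ico r si, (a (c+1) - a c) * F si = (a si - a r) * F si := by
      rw [← Finset.sum_mul]
      congr 1
      rw [Finset.sum_Ico_eq_sub _ h, Finset.sum_range_sub, Finset.sum_range_sub]
      ring
    nlinarith [h1, h2, hP]
  · have hP : ∑ c ∈ Finset.range r, (a (c+1) - a c) * F (c+1)
        - ∑ c ∈ Finset.range si, (a (c+1) - a c) * F (c+1)
        = ∑ c ∈ Finset.Ico si r, (a (c+1) - a c) * F (c+1) := by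
      rw [Finset.sum_Ico_eq_sub _ h]
    have h1 : ∑ c ∈ Finset.Ico si r, (a (c+1) - a c) * F si
        ≤ ∑ c ∈ Finset.Ico si r, (a (c+1) - a c) * F (c+1) := by
      refine Finset.sum_le_sum fun c hc => ?_
      have hc' := Finset.mem_Ico.mp hc
      exact mul_le_mul_of_nonneg_left (hF (Nat.le_succ_of_le hc'.1)) (by simpa using ha (Nat.le_succ c))
    have h2 : ∑ c ∈ Finset.Ico si r, (a (c+1) - a c) * F si = (a r - a si) * F si := by
      rw [← Finset.sum_mul]
      congr 1
      rw [Finset.sum_Ico_eq_sub _ h, Finset.sum_range_sub, Finset.sum_range_sub]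
      ring
    nlinarith [h1, h2, hP]

theorem symmetric_shared_quality_welfare_approx
    (n k : ℕ) (hn : 1 ≤ n) (hk : 2 ≤ k)
    (f : Fin n → ℕ → ℝ)
    (hf_nonneg : ∀ i m, 0 ≤ f i m)
    (hf_mono : ∀ i, Monotone (f i))
    (v : Fin n → (Fin n → Fin k) → ℝ)
    (hv : ∀ i s, v i s = f i (∑ j, (s j : ℕ))) :
    ∃ x p : (Fin n → Fin k) → Fin n → ℝ,
      (∀ s i, 0 ≤ x s i) ∧ (∀ s, ∑ i, x s i ≤ 1) ∧
      (∀ s i, 0 ≤ p s i) ∧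
      (∀ (i : Fin n) (s : Fin n → Fin k) (t : Fin k),
        x s i * v i s - p s i ≥
          x (Function.update s i t) i * v i s - p (Function.update s i t) i) ∧
      (∀ (i : Fin n) (s : Fin n → Fin k), x s i * v i s - p s i ≥ 0) ∧
      (∀ s : Fin n → Fin k,
        ∑ i, x s i * v i s ≥
          (1 / (5 * ((k : ℝ) - 1))) *
            Finset.univ.sup' ⟨⟨0, hn⟩, Finset.mem_univ _⟩ (fun i => v i s)) := by
  classical
  have hk0 : (0:ℝ) < (k:ℝ) := by
    have : (0:ℕ) < k := by omega
    exact_mod_cast this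
  -- choose a pointwise argmax of the f's
  have hwex : ∀ m : ℕ, ∃ i : Fin n, ∀ j : Fin n, f j m ≤ f i m := by
    intro m
    obtain ⟨i, -, hi⟩ := Finset.exists_max_image (Finset.univ : Finset (Fin n))
      (fun i => f i m) ⟨⟨0, hn⟩, Finset.mem_univ _⟩
    exact ⟨i, fun j => hi j (Finset.mem_univ j)⟩
  choose w hw using hwex
  -- sum of others' signals
  set Tm : (Fin n → Fin k) → Fin n → ℕ :=
    fun s i => ∑ j ∈ Finset.univ.erase i, ((s j : ℕ)) with hTmdef
  have hT : ∀ (s : Fin n → Fin k) (i : Fin n), (∑ j, ((s j : ℕ))) = Tm s i + (s i : ℕ) := by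
    intro s i
    exact (Finset.sum_erase_add Finset.univ _ (Finset.mem_univ i)).symm
  have hTmupd : ∀ (s : Fin n → Fin k) (i : Fin n) (t : Fin k),
      Tm (Function.update s i t) i = Tm s i := by
    intro s i t
    refine Finset.sum_congr rfl fun j hj => ?_
    rw [Function.update_of_ne (Finset.ne_of_mem_erase hj)]
  -- allocation building block : share of bidder i when others sum to b and i reports c
  set A : ℕ → ℕ → Fin n → ℝ :=
    fun b c i => (((Finset.Icc b (b+c)).filter fun m => w m = i).card : ℝ) / k with hAdef
  have hAnn : ∀ b c i, 0 ≤ A b c i := by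
    intro b c i
    have : (0:ℝ) ≤ (((Finset.Icc b (b+c)).filter fun m => w m = i).card : ℝ) := by positivity
    exact div_nonneg this hk0.le
  have hAmono : ∀ b i, Monotone fun c => A b c i := by
    intro b i c c' hcc
    simp only [hAdef]
    have hsub : ((Finset.Icc b (b+c)).filter fun m => w m = i)
        ⊆ ((Finset.Icc b (b+c')).filter fun m => w m = i) :=
      Finset.filter_subset_filter _ (Finset.Icc_subset_Icc_right (by omega))
    have hcard := Finset.card_le_card hsub
    exact (div_le_div_iff_of_pos_right hk0).mpr (by exact_mod_cast hcard)
  refine ⟨fun s i => A (Tm s i) ((s i : ℕ)) i,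
    fun s i => ∑ c ∈ Finset.range ((s i : ℕ)),
      (A (Tm s i) (c+1) i - A (Tm s i) c i) * f i (Tm s i + (c+1)),
    ?_, ?_, ?_, ?_, ?_, ?_⟩
  -- nonnegativity of x
  · intro s i; exact hAnn _ _ _
  -- feasibility
  · intro s
    set T : ℕ := ∑ j, ((s j : ℕ)) with hTdef
    have key : (∑ i, (((Finset.Icc (Tm s i) (Tm s i + (s i : ℕ))).filter
        fun m => w m = i).card)) ≤ k := by
      set P : Fin n → Finset ℕ :=
        fun i => (Finset.Icc (T - (k-1)) T).filter fun m => w m = i with hPdef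
      have hsub : ∀ i, ((Finset.Icc (Tm s i) (Tm s i + (s i : ℕ))).filter
          fun m => w m = i) ⊆ P i := by
        intro i
        refine Finset.filter_subset_filter _ ?_
        intro m hm
        rw [Finset.mem_Icc] at hm ⊢
        have h1 := hT s i
        have h2 : (s i : ℕ) < k := (s i).2
        omega
      have hdisj : ((Finset.univ : Finset (Fin n)) : Set (Fin n)).PairwiseDisjoint P := by
        intro i _ j _ hij
        refine Finset.disjoint_left.mpr fun m hmi hmj => ?_
        rw [hPdef, Finset.mem_filter] at hmi hmj
        exact hij (hmi.2 ▸ hmj.2 ▸ rfl)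
      calc (∑ i, (((Finset.Icc (Tm s i) (Tm s i + (s i : ℕ))).filter
            fun m => w m = i).card))
          ≤ ∑ i, (P i).card := Finset.sum_le_sum fun i _ => Finset.card_le_card (hsub i)
        _ = (Finset.univ.biUnion P).card := (Finset.card_biUnion hdisj).symm
        _ ≤ (Finset.Icc (T - (k-1)) T).card := by
            refine Finset.card_le_card ?_
            intro m hm
            obtain ⟨i, -, hi⟩ := Finset.mem_biUnion.mp hm
            exact Finset.mem_of_mem_filter m hi
        _ ≤ k := by rw [Nat.card_Icc]; omega
    have : (∑ i, A (Tm s i) ((s i : ℕ)) i)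
        = ((∑ i, (((Finset.Icc (Tm s i) (Tm s i + (s i : ℕ))).filter
            fun m => w m = i).card) : ℕ) : ℝ) / k := by
      rw [Nat.cast_sum, Finset.sum_div]
    rw [this, div_le_one hk0]
    exact_mod_cast key
  -- nonnegativity of payments
  · intro s i
    refine Finset.sum_nonneg fun c _ => mul_nonneg ?_ (hf_nonneg _ _)
    have := hAmono (Tm s i) i (Nat.le_succ c)
    simpa using this
  -- ex-post IC
  · intro i s t
    have hb := hTmupd s i t
    have hupd : ((Function.update s i t i : Fin k) : ℕ) = (t : ℕ) := by
      rw [Function.update_self]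
    have hvv : v i s = f i (Tm s i + (s i : ℕ)) := by rw [hv, hT s i]
    rw [ge_iff_le]
    simp only [hb, hupd, hvv]
    exact myerson_ic (fun c => A (Tm s i) c i) (fun c => f i (Tm s i + c))
      (hAmono _ _) (fun c c' h => hf_mono i (by omega)) ((s i : ℕ)) ((t : ℕ))
  -- ex-post IR
  · intro i s
    have hvv : v i s = f i (Tm s i + (s i : ℕ)) := by rw [hv, hT s i]
    have h0 := myerson_ic (fun c => A (Tm s i) c i) (fun c => f i (Tm s i + c))
      (hAmono _ _) (fun c c' h => hf_mono i (by omega)) ((s i : ℕ)) 0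
    simp only [Finset.range_zero, Finset.sum_empty, sub_zero] at h0
    have hnn : 0 ≤ A (Tm s i) 0 i * f i (Tm s i + (s i : ℕ)) :=
      mul_nonneg (hAnn _ _ _) (hf_nonneg _ _)
    rw [ge_iff_le, hvv]
    linarith
  -- welfare approximation
  · intro s
    set T : ℕ := ∑ j, ((s j : ℕ)) with hTdef
    set iw : Fin n := w T with hiwdef
    have hterm : ∀ i ∈ (Finset.univ : Finset (Fin n)),
        0 ≤ A (Tm s i) ((s i : ℕ)) i * v i s := by
      intro i _
      exact mul_nonneg (hAnn _ _ _) (by rw [hv]; exact hf_nonneg _ _)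
    have hsingle : A (Tm s iw) ((s iw : ℕ)) iw * v iw s
        ≤ ∑ i, A (Tm s i) ((s i : ℕ)) i * v i s :=
      Finset.single_le_sum hterm (Finset.mem_univ iw)
    -- the winner at the true total gets at least 1/k
    have hmem : T ∈ (Finset.Icc (Tm s iw) (Tm s iw + (s iw : ℕ))).filter
        fun m => w m = iw := by
      rw [Finset.mem_filter, Finset.mem_Icc]
      refine ⟨⟨?_, ?_⟩, rfl⟩
      · have := hT s iw; omega
      · have := hT s iw; omega
    have hcard : 1 ≤ (((Finset.Icc (Tm s iw) (Tm s iw + (s iw : ℕ))).filter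
        fun m => w m = iw).card) := Finset.card_pos.mpr ⟨T, hmem⟩
    have hxw : 1 / (k:ℝ) ≤ A (Tm s iw) ((s iw : ℕ)) iw := by
      simp only [hAdef]
      exact (div_le_div_iff_of_pos_right hk0).mpr (by exact_mod_cast hcard)
    have hvw : ∀ i : Fin n, v i s ≤ v iw s := by
      intro i
      rw [hv, hv]
      exact hw T i
    have hsup : Finset.univ.sup' ⟨⟨0, hn⟩, Finset.mem_univ _⟩ (fun i => v i s) ≤ v iw s :=
      Finset.sup'_le _ _ fun i _ => hvw i
    have hsupnn : 0 ≤ Finset.univ.sup' ⟨⟨0, hn⟩, Finset.mem_univ _⟩ (fun i => v i s) := by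
      refine le_trans ?_ (Finset.le_sup' (fun i => v i s) (Finset.mem_univ ⟨0, hn⟩))
      rw [hv]; exact hf_nonneg _ _
    have hvwnn : 0 ≤ v iw s := by rw [hv]; exact hf_nonneg _ _
    have hk2 : (2:ℝ) ≤ (k:ℝ) := by exact_mod_cast hk
    have hfrac : 1 / (5 * ((k:ℝ) - 1)) ≤ 1 / (k:ℝ) := by
      apply one_div_le_one_div_of_le hk0
      nlinarith
    rw [ge_iff_le]
    calc (1 / (5 * ((k : ℝ) - 1))) *
          Finset.univ.sup' ⟨⟨0, hn⟩, Finset.mem_univ _⟩ (fun i => v i s)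
        ≤ (1 / (k:ℝ)) * Finset.univ.sup' ⟨⟨0, hn⟩, Finset.mem_univ _⟩ (fun i => v i s) :=
          mul_le_mul_of_nonneg_right hfrac hsupnn
      _ ≤ (1 / (k:ℝ)) * v iw s := by
          apply mul_le_mul_of_nonneg_left hsup
          positivity
      _ ≤ A (Tm s iw) ((s iw : ℕ)) iw * v iw s := mul_le_mul_of_nonneg_right hxw hvwnn
      _ ≤ ∑ i, A (Tm s i) ((s i : ℕ)) i * v i s := hsingle
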